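/- Let λ_1 ≥ λ_2 > 0 be given. Then there exist a_1, a_2, a_3 > 0 such that, with A_3 the diagonal matrix with entries a_1, a_2, a_3 and C_3 the periodic chain matrix for n = 3, the matrix A_3C_3 has eigenvalues λ_1, λ_2 and 0. Moreover, if λ_1 = λ_2 = λ, then the only such triple is a_1 = a_2 = a_3 = λ/3. -/

import Mathlib

open Matrix Polynomial

/-- The periodic chain matrix `C_n`: `2` on the diagonal, `-1` at positions
`(i, i+1)` and `(i, i-1)` with indices modulo `n`, and `0` elsewhere. -/
def pchain (n : ℕ) [NeZero n] : Matrix (Fin n) (Fin n) ℝ :=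
  Matrix.of fun i j => if i = j then 2 else if j = i + 1 ∨ i = j + 1 then -1 else 0

lemma aux (a1 a2 a3 : ℝ) :
    (Matrix.diagonal ![a1, a2, a3] * pchain 3).charpoly =
      X^3 - C (2*(a1+a2+a3)) * X^2 + C (3*(a1*a2+a1*a3+a2*a3)) * X := by
  rw [Matrix.charpoly, Matrix.det_fin_three]
  simp [charmatrix_apply, Matrix.mul_apply, pchain, Fin.sum_univ_three, Matrix.diagonal]
  simp only [map_ofNat]
  ring

lemma auxrhs (l1 l2 : ℝ) :
    X * (X - C l1) * (X - C l2) = X^3 - C (l1 + l2) * X^2 + C (l1*l2) * X := by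
  simp only [map_add, _root_.map_mul]
  ring

theorem stmt5 (l1 l2 : ℝ) (h12 : l1 ≥ l2) (h2 : 0 < l2) :
    (∃ a1 a2 a3 : ℝ, 0 < a1 ∧ 0 < a2 ∧ 0 < a3 ∧
      (Matrix.diagonal ![a1, a2, a3] * pchain 3).charpoly =
        X * (X - C l1) * (X - C l2)) ∧
    (l1 = l2 → ∀ a1 a2 a3 : ℝ, 0 < a1 → 0 < a2 → 0 < a3 →
      (Matrix.diagonal ![a1, a2, a3] * pchain 3).charpoly =
        X * (X - C l1) * (X - C l2) →
      a1 = l1 / 3 ∧ a2 = l1 / 3 ∧ a3 = l1 / 3) := by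
  constructor
  · refine ⟨l2/3, l2/3, (3*l1 - l2)/6, by linarith, by linarith, by linarith, ?_⟩
    rw [aux, auxrhs]
    congr 2
    · congr 1; ring
    · congr 1; ring
  · rintro rfl a1 a2 a3 h1 h2' h3 hpoly
    rw [aux, auxrhs] at hpoly
    have hc2 : 2*(a1+a2+a3) = l1 + l1 := by
      have h := congrArg (fun p => p.coeff 2) hpoly
      simp only [coeff_add, coeff_sub, coeff_C_mul, coeff_X_pow, coeff_X] at h
      norm_num at h
      linarith
    have hc1 : 3*(a1*a2+a1*a3+a2*a3) = l1*l1 := by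
      have h := congrArg (fun p => p.coeff 1) hpoly
      simp only [coeff_add, coeff_sub, coeff_C_mul, coeff_X_pow, coeff_X] at h
      norm_num at h
      linarith
    have hsq : (a1-a2)^2 + (a1-a3)^2 + (a2-a3)^2 = 0 := by nlinarith
    have e1 : a1 = a2 := by nlinarith [sq_nonneg (a1-a2), sq_nonneg (a1-a3), sq_nonneg (a2-a3)]
    have e2 : a2 = a3 := by nlinarith [sq_nonneg (a1-a2), sq_nonneg (a1-a3), sq_nonneg (a2-a3)]
    refine ⟨by linarith, by linarith, by linarith⟩
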